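/- arXiv:2209.06171 — 2 statements merged into one kernel-verified Lean document; each statement's English description precedes it below -/
import Mathlib

section
/- Let D be a P⃗4-free oriented graph, let P = p1→p2→⋯→p_ℓ be a forward-induced directed path in D, and let R^p be defined with respect to P. If v, w ∈ R^p and (w,v) ∈ E(D), then D contains a directed path from v to w on at most max{6, ℓ−1} vertices. -/
namespace DichiP4

variable {V : Type*}

/-- An oriented graph: an arc relation with no digons (hence also no loops). -/
def Oriented (A : V → V → Prop) : Prop := ∀ u v, A u v → ¬ A v u

/-- Adjacency in the underlying (undirected) graph. -/
def Adj (A : V → V → Prop) (u v : V) : Prop := A u v ∨ A v u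

/-- The neighborhood `N(v)` of a vertex in the underlying graph. -/
def nbr (A : V → V → Prop) (v : V) : Set V := {w | Adj A v w}

/-- `N(S)`: the neighborhood of a set of vertices. -/
def nbrSet (A : V → V → Prop) (S : Set V) : Set V := (⋃ v ∈ S, nbr A v) \ S

/-- `N[S]`: the closed neighborhood of a set of vertices. -/
def cnbrSet (A : V → V → Prop) (S : Set V) : Set V := ⋃ v ∈ S, insert v (nbr A v)

/-- A clique in the underlying graph (= the vertex set of a tournament). -/
def IsClique (A : V → V → Prop) (K : Set V) : Prop :=
  ∀ u ∈ K, ∀ v ∈ K, u ≠ v → Adj A u v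

/-- The clique number `ω(D)` of the underlying graph. -/
noncomputable def cliqueNum (A : V → V → Prop) : ℕ :=
  sSup {n | ∃ K : Set V, IsClique A K ∧ K.Finite ∧ K.ncard = n}

/-- The set `s` induces an acyclic subdigraph (no directed cycle within `s`). -/
def AcyclicOn (A : V → V → Prop) (s : Set V) : Prop :=
  ∀ v, ¬ Relation.TransGen (fun x y => x ∈ s ∧ y ∈ s ∧ A x y) v v

/-- The set `s` admits a dicoloring with `k` colors: every color class induces an
acyclic subdigraph. -/
def DicolorableOn (A : V → V → Prop) (s : Set V) (k : ℕ) : Prop :=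
  ∃ c : V → ℕ, (∀ v ∈ s, c v < k) ∧ ∀ i : ℕ, AcyclicOn A {v | v ∈ s ∧ c v = i}

/-- The dichromatic number `χ⃗(s)` of the subdigraph induced by `s`. -/
noncomputable def dichi (A : V → V → Prop) (s : Set V) : ℕ :=
  sInf {k | DicolorableOn A s k}

/-- `A` has an induced subdigraph isomorphic to `B`. -/
def HasInducedCopy {W : Type*} (A : V → V → Prop) (B : W → W → Prop) : Prop :=
  ∃ f : W → V, Function.Injective f ∧ ∀ x y : W, B x y ↔ A (f x) (f y)

/-- `A` is `B`-free: no induced subdigraph of `A` is isomorphic to `B`. -/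
def Free {W : Type*} (A : V → V → Prop) (B : W → W → Prop) : Prop :=
  ¬ HasInducedCopy A B

/-- `P⃗4`: the orientation of the path `0 – 1 – 2 – 3` with arcs `0→1, 1→2, 2→3`. -/
def P4vec : Fin 4 → Fin 4 → Prop := fun x y =>
  (x = 0 ∧ y = 1) ∨ (x = 1 ∧ y = 2) ∨ (x = 2 ∧ y = 3)

/-- `A⃗4`: the orientation of the path `0 – 1 – 2 – 3` with arcs `1→0, 1→2, 3→2`. -/
def A4vec : Fin 4 → Fin 4 → Prop := fun x y =>
  (x = 1 ∧ y = 0) ∨ (x = 1 ∧ y = 2) ∨ (x = 3 ∧ y = 2)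

/-- `Q⃗4`: the orientation of the path `0 – 1 – 2 – 3` with arcs `0→1, 2→1, 3→2`. -/
def Q4vec : Fin 4 → Fin 4 → Prop := fun x y =>
  (x = 0 ∧ y = 1) ∨ (x = 2 ∧ y = 1) ∨ (x = 3 ∧ y = 2)

/-- `Q⃗4'`: the orientation of the path `0 – 1 – 2 – 3` with arcs `1→0, 2→1, 2→3`. -/
def Q4'vec : Fin 4 → Fin 4 → Prop := fun x y =>
  (x = 1 ∧ y = 0) ∨ (x = 2 ∧ y = 1) ∨ (x = 2 ∧ y = 3)

/-- `B` is an orientation of the path on four vertices `0 – 1 – 2 – 3`. -/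
def IsP4Orientation (B : Fin 4 → Fin 4 → Prop) : Prop :=
  Oriented B ∧ ∀ x y : Fin 4, Adj B x y ↔ ((x : ℕ) + 1 = (y : ℕ) ∨ (y : ℕ) + 1 = (x : ℕ))

/-- `p 1 → p 2 → ⋯ → p ℓ` is a directed path in `A` (distinct vertices). -/
def IsDirPath (A : V → V → Prop) (ℓ : ℕ) (p : ℕ → V) : Prop :=
  1 ≤ ℓ ∧ Set.InjOn p (Set.Icc 1 ℓ) ∧ ∀ i, 1 ≤ i → i < ℓ → A (p i) (p (i + 1))

/-- A directed path `p 1 → ⋯ → p ℓ` is forward-induced: no arc `(p i, p j)` with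
`j > i + 1`. -/
def ForwardInduced (A : V → V → Prop) (ℓ : ℕ) (p : ℕ → V) : Prop :=
  ∀ i j, 1 ≤ i → j ≤ ℓ → i + 1 < j → ¬ A (p i) (p j)

/-- `p 1 → ⋯ → p ℓ` is a shortest directed path from `p 1` to `p ℓ`. -/
def IsShortestDirPath (A : V → V → Prop) (ℓ : ℕ) (p : ℕ → V) : Prop :=
  IsDirPath A ℓ p ∧
    ∀ (m : ℕ) (q : ℕ → V), IsDirPath A m q → q 1 = p 1 → q m = p ℓ → ℓ ≤ m

/-- The vertex set `V(P)` of the path `p 1, …, p ℓ`. -/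
def pathSet (ℓ : ℕ) (p : ℕ → V) : Set V := p '' Set.Icc 1 ℓ

/-- `N(P)`: the neighborhood of the vertex set of the path. -/
def pathNbrs (A : V → V → Prop) (ℓ : ℕ) (p : ℕ → V) : Set V := nbrSet A (pathSet ℓ p)

/-- `F i`: vertices of `N(P)` whose first neighbor on the path is `p i`. -/
def Fatt (A : V → V → Prop) (ℓ : ℕ) (p : ℕ → V) (i : ℕ) : Set V :=
  {v ∈ pathNbrs A ℓ p | Adj A v (p i) ∧ ∀ i', 1 ≤ i' → i' < i → ¬ Adj A v (p i')}

/-- `L j`: vertices of `N(P)` whose last neighbor on the path is `p j`. -/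
def Latt (A : V → V → Prop) (ℓ : ℕ) (p : ℕ → V) (j : ℕ) : Set V :=
  {v ∈ pathNbrs A ℓ p | Adj A v (p j) ∧ ∀ j', j < j' → j' ≤ ℓ → ¬ Adj A v (p j')}

/-- `F i ⁺`: in-neighbors of `p i` in `F i`. -/
def FattP (A : V → V → Prop) (ℓ : ℕ) (p : ℕ → V) (i : ℕ) : Set V :=
  {v ∈ Fatt A ℓ p i | A v (p i)}

/-- `F i ⁻`: out-neighbors of `p i` in `F i`. -/
def FattM (A : V → V → Prop) (ℓ : ℕ) (p : ℕ → V) (i : ℕ) : Set V :=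
  {v ∈ Fatt A ℓ p i | A (p i) v}

/-- `L j ⁺`: in-neighbors of `p j` in `L j`. -/
def LattP (A : V → V → Prop) (ℓ : ℕ) (p : ℕ → V) (j : ℕ) : Set V :=
  {v ∈ Latt A ℓ p j | A v (p j)}

/-- `L j ⁻`: out-neighbors of `p j` in `L j`. -/
def LattM (A : V → V → Prop) (ℓ : ℕ) (p : ℕ → V) (j : ℕ) : Set V :=
  {v ∈ Latt A ℓ p j | A (p j) v}

/-- `W^p = (F₂⁻ ∪ ⋯ ∪ F_{ℓ-1}⁻) ∪ (L₂⁺ ∪ ⋯ ∪ L_{ℓ-1}⁺)`. -/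
def Wp (A : V → V → Prop) (ℓ : ℕ) (p : ℕ → V) : Set V :=
  (⋃ i ∈ Set.Icc 2 (ℓ - 1), FattM A ℓ p i) ∪ ⋃ i ∈ Set.Icc 2 (ℓ - 1), LattP A ℓ p i

/-- `W^a = (F₂⁺ ∪ ⋯ ∪ F_{ℓ-1}⁺) ∪ (L₂⁻ ∪ ⋯ ∪ L_{ℓ-1}⁻)`. -/
def Wa (A : V → V → Prop) (ℓ : ℕ) (p : ℕ → V) : Set V :=
  (⋃ i ∈ Set.Icc 2 (ℓ - 1), FattP A ℓ p i) ∪ ⋃ i ∈ Set.Icc 2 (ℓ - 1), LattM A ℓ p i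

/-- `R^p = N(P) \ (N({p1, p2, pℓ}) ∪ W^p)`. -/
def Rp (A : V → V → Prop) (ℓ : ℕ) (p : ℕ → V) : Set V :=
  pathNbrs A ℓ p \ (nbrSet A {p 1, p 2, p ℓ} ∪ Wp A ℓ p)

/-- `R^a = N(P) \ (N({p1, pℓ}) ∪ W^a)`. -/
def Ra (A : V → V → Prop) (ℓ : ℕ) (p : ℕ → V) : Set V :=
  pathNbrs A ℓ p \ (nbrSet A {p 1, p ℓ} ∪ Wa A ℓ p)

/-- A dipolar set: a nonempty set `S` partitioned into `S⁺` (no out-neighbor outside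
`S`) and `S⁻` (no in-neighbor outside `S`). -/
def IsDipolar (A : V → V → Prop) (S : Set V) : Prop :=
  S.Nonempty ∧ ∃ Sp Sm : Set V, Sp ∪ Sm = S ∧ Disjoint Sp Sm ∧
    (∀ v ∈ Sp, ∀ w, w ∉ S → ¬ A v w) ∧ ∀ v ∈ Sm, ∀ w, w ∉ S → ¬ A w v

/-- Reachability by a directed path staying inside `s`. -/
def ReachIn (A : V → V → Prop) (s : Set V) (u v : V) : Prop :=
  Relation.ReflTransGen (fun x y => x ∈ s ∧ y ∈ s ∧ A x y) u v

/-- A digraph is strongly connected. -/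
def StronglyConnected (A : V → V → Prop) : Prop :=
  ∀ u v : V, Relation.ReflTransGen A u v

/-- `t` is a strongly connected component of the subdigraph induced by `s`. -/
def IsSCCOf (A : V → V → Prop) (s t : Set V) : Prop :=
  t ⊆ s ∧ t.Nonempty ∧ (∀ u ∈ t, ∀ v ∈ t, ReachIn A s u v) ∧
    ∀ u ∈ t, ∀ v ∈ s, ReachIn A s u v → ReachIn A s v u → v ∈ t

/-- A source strongly connected component: all arcs between it and the rest of `s`
begin in it. -/
def IsSourceSCC (A : V → V → Prop) (s t : Set V) : Prop :=
  IsSCCOf A s t ∧ ∀ u ∈ s, ∀ v ∈ t, A u v → u ∈ t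

/-- A sink strongly connected component: all arcs between it and the rest of `s`
end in it. -/
def IsSinkSCC (A : V → V → Prop) (s t : Set V) : Prop :=
  IsSCCOf A s t ∧ ∀ u ∈ t, ∀ v ∈ s, A u v → v ∈ t

/-- `K` (a tournament of maximum order) and the directed path `p 1 → ⋯ → p ℓ`
(from a source SCC of `D[K]` to a sink SCC of `D[K]`) form a closed tournament
`C = K ∪ V(P)`. -/
def FormsClosedTournament (A : V → V → Prop) (K : Set V) (ℓ : ℕ) (p : ℕ → V) : Prop :=
  IsClique A K ∧ K.Finite ∧ K.ncard = cliqueNum A ∧ IsDirPath A ℓ p ∧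
    (∃ t, IsSourceSCC A K t ∧ p 1 ∈ t) ∧ ∃ t, IsSinkSCC A K t ∧ p ℓ ∈ t

/-- `K` and `P` form a path-minimizing closed tournament: `|P|` is minimum among
all pairs forming a closed tournament. -/
def FormsPathMinClosedTournament (A : V → V → Prop) (K : Set V) (ℓ : ℕ) (p : ℕ → V) :
    Prop :=
  FormsClosedTournament A K ℓ p ∧
    ∀ (K' : Set V) (ℓ' : ℕ) (p' : ℕ → V), FormsClosedTournament A K' ℓ' p' → ℓ ≤ ℓ'

/-- The strong neighborhood of `S`: neighbors of `S` having both an in-neighbor and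
an out-neighbor in `S`. -/
def strongNbrs (A : V → V → Prop) (S : Set V) : Set V :=
  {v ∈ nbrSet A S | (∃ u ∈ S, A u v) ∧ ∃ u ∈ S, A v u}

section Aux

variable {V : Type*}

lemma oriented_irrefl {A : V → V → Prop} (hA : Oriented A) (x : V) : ¬ A x x :=
  fun h => hA x x h h

lemma hasInducedCopy_P4' {A : V → V → Prop} (hA : Oriented A) {a b c d : V}
    (h01 : A a b) (h12 : A b c) (h23 : A c d)
    (n02 : ¬ Adj A a c) (n03 : ¬ Adj A a d) (n13 : ¬ Adj A b d) :
    HasInducedCopy A P4vec := by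
  have nab : a ≠ b := by rintro rfl; exact hA _ _ h01 h01
  have nbc : b ≠ c := by rintro rfl; exact hA _ _ h12 h12
  have ncd : c ≠ d := by rintro rfl; exact hA _ _ h23 h23
  have nac : a ≠ c := by rintro rfl; exact hA _ _ h01 h12
  have nbd : b ≠ d := by rintro rfl; exact hA _ _ h12 h23
  have nad : a ≠ d := by rintro rfl; exact n02 (Or.inr h23)
  have n10 : ¬ A b a := hA _ _ h01
  have n21 : ¬ A c b := hA _ _ h12
  have n32 : ¬ A d c := hA _ _ h23
  have n02' : ¬ A a c := fun h => n02 (Or.inl h)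
  have n20 : ¬ A c a := fun h => n02 (Or.inr h)
  have n03' : ¬ A a d := fun h => n03 (Or.inl h)
  have n30 : ¬ A d a := fun h => n03 (Or.inr h)
  have n13' : ¬ A b d := fun h => n13 (Or.inl h)
  have n31 : ¬ A d b := fun h => n13 (Or.inr h)
  have naa := oriented_irrefl hA a
  have nbb := oriented_irrefl hA b
  have ncc := oriented_irrefl hA c
  have ndd := oriented_irrefl hA d
  refine ⟨![a, b, c, d], ?_, ?_⟩
  · intro x y h
    fin_cases x <;> fin_cases y <;> simp_all
  · intro x y
    fin_cases x <;> fin_cases y <;>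
      simp_all [P4vec, Fin.ext_iff] <;> decide

lemma dirPath4 (A : V → V → Prop) (a b c d : V)
    (h1 : A a b) (h2 : A b c) (h3 : A c d)
    (nab : a ≠ b) (nac : a ≠ c) (nad : a ≠ d)
    (nbc : b ≠ c) (nbd : b ≠ d) (ncd : c ≠ d) :
    ∃ q : ℕ → V, IsDirPath A 4 q ∧ q 1 = a ∧ q 4 = d := by
  refine ⟨fun k => if k = 1 then a else if k = 2 then b else if k = 3 then c else d,
    ⟨by norm_num, ?_, ?_⟩, by norm_num, by norm_num⟩
  · intro x hx y hy h
    obtain ⟨hx1, hx2⟩ := Set.mem_Icc.mp hx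
    obtain ⟨hy1, hy2⟩ := Set.mem_Icc.mp hy
    interval_cases x <;> interval_cases y <;> simp_all
  · intro k hk1 hk2
    interval_cases k <;> simp_all

lemma dirPath5 (A : V → V → Prop) (a b c d e : V)
    (h1 : A a b) (h2 : A b c) (h3 : A c d) (h4 : A d e)
    (nab : a ≠ b) (nac : a ≠ c) (nad : a ≠ d) (nae : a ≠ e)
    (nbc : b ≠ c) (nbd : b ≠ d) (nbe : b ≠ e)
    (ncd : c ≠ d) (nce : c ≠ e) (nde : d ≠ e) :
    ∃ q : ℕ → V, IsDirPath A 5 q ∧ q 1 = a ∧ q 5 = e := by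
  refine ⟨fun k => if k = 1 then a else if k = 2 then b else if k = 3 then c else
      if k = 4 then d else e,
    ⟨by norm_num, ?_, ?_⟩, by norm_num, by norm_num⟩
  · intro x hx y hy h
    obtain ⟨hx1, hx2⟩ := Set.mem_Icc.mp hx
    obtain ⟨hy1, hy2⟩ := Set.mem_Icc.mp hy
    interval_cases x <;> interval_cases y <;> simp_all
  · intro k hk1 hk2
    interval_cases k <;> simp_all

lemma dirPath6 (A : V → V → Prop) (a b c d e f : V)
    (h1 : A a b) (h2 : A b c) (h3 : A c d) (h4 : A d e) (h5 : A e f)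
    (nab : a ≠ b) (nac : a ≠ c) (nad : a ≠ d) (nae : a ≠ e) (naf : a ≠ f)
    (nbc : b ≠ c) (nbd : b ≠ d) (nbe : b ≠ e) (nbf : b ≠ f)
    (ncd : c ≠ d) (nce : c ≠ e) (ncf : c ≠ f)
    (nde : d ≠ e) (ndf : d ≠ f) (nef : e ≠ f) :
    ∃ q : ℕ → V, IsDirPath A 6 q ∧ q 1 = a ∧ q 6 = f := by
  refine ⟨fun k => if k = 1 then a else if k = 2 then b else if k = 3 then c else
      if k = 4 then d else if k = 5 then e else f,
    ⟨by norm_num, ?_, ?_⟩, by norm_num, by norm_num⟩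
  · intro x hx y hy h
    obtain ⟨hx1, hx2⟩ := Set.mem_Icc.mp hx
    obtain ⟨hy1, hy2⟩ := Set.mem_Icc.mp hy
    interval_cases x <;> interval_cases y <;> simp_all
  · intro k hk1 hk2
    interval_cases k <;> simp_all

end Aux

/-- in a `P⃗4`-free oriented graph, if `v, w ∈ R^p` and `(w,v)` is an
arc, then there is a directed path from `v` to `w` on at most `max 6 (ℓ-1)`
vertices. -/
theorem P4free_Rp_short_path {V : Type*}
    (A : V → V → Prop) (hA : Oriented A) (hfree : Free A P4vec)
    (ℓ : ℕ) (p : ℕ → V) (hp : IsDirPath A ℓ p) (hfi : ForwardInduced A ℓ p)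
    (v w : V) (hv : v ∈ Rp A ℓ p) (hw : w ∈ Rp A ℓ p) (harc : A w v) :
    ∃ (m : ℕ) (q : ℕ → V),
      IsDirPath A m q ∧ q 1 = v ∧ q m = w ∧ m ≤ max 6 (ℓ - 1) := by
  classical
  obtain ⟨hl1, hinj, harcp⟩ := hp
  obtain ⟨hvN, hvX⟩ := hv
  obtain ⟨hwN, hwX⟩ := hw
  have hvP : v ∉ pathSet ℓ p := hvN.2
  have hwP : w ∉ pathSet ℓ p := hwN.2
  have hvw : v ≠ w := by rintro rfl; exact hA _ _ harc harc
  have hvP' : ∀ k, 1 ≤ k → k ≤ ℓ → v ≠ p k := fun k h1 h2 e => hvP ⟨k, ⟨h1, h2⟩, e.symm⟩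
  have hwP' : ∀ k, 1 ≤ k → k ≤ ℓ → w ≠ p k := fun k h1 h2 e => hwP ⟨k, ⟨h1, h2⟩, e.symm⟩
  have pne : ∀ a b : ℕ, 1 ≤ a → a ≤ ℓ → 1 ≤ b → b ≤ ℓ → a ≠ b → p a ≠ p b :=
    fun a b h1 h2 h3 h4 hne he => hne (hinj ⟨h1, h2⟩ ⟨h3, h4⟩ he)
  have hvadj : ∃ k, (1 ≤ k ∧ k ≤ ℓ) ∧ Adj A v (p k) := by
    obtain ⟨u, hu, hadj⟩ := Set.mem_iUnion₂.mp hvN.1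
    obtain ⟨k, hk, rfl⟩ := hu
    exact ⟨k, ⟨hk.1, hk.2⟩, Or.symm hadj⟩
  have hwadj : ∃ k, (1 ≤ k ∧ k ≤ ℓ) ∧ Adj A w (p k) := by
    obtain ⟨u, hu, hadj⟩ := Set.mem_iUnion₂.mp hwN.1
    obtain ⟨k, hk, rfl⟩ := hu
    exact ⟨k, ⟨hk.1, hk.2⟩, Or.symm hadj⟩
  -- the degenerate case ℓ = 1
  rcases Nat.lt_or_ge ℓ 2 with hl2 | hl2
  · have hℓ : ℓ = 1 := by omega
    subst hℓ
    have hmem2 : ∀ x : V, x ∈ Rp A 1 p → x ∉ pathSet 1 p →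
        (∃ k, (1 ≤ k ∧ k ≤ 1) ∧ Adj A x (p k)) → x = p 2 := by
      intro x hx hxP ⟨k, hk, hadj⟩
      have hk1 : k = 1 := by omega
      subst hk1
      by_contra hne
      apply hx.2
      left
      refine ⟨Set.mem_iUnion₂.mpr ⟨p 1, by simp, Or.symm hadj⟩, ?_⟩
      intro hmem
      simp only [Set.mem_insert_iff, Set.mem_singleton_iff] at hmem
      rcases hmem with rfl | rfl | rfl
      · exact hxP ⟨1, ⟨le_rfl, le_rfl⟩, rfl⟩
      · exact hne rfl
      · exact hxP ⟨1, ⟨le_rfl, le_rfl⟩, rfl⟩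
    have hv2 := hmem2 v ⟨hvN, hvX⟩ hvP hvadj
    have hw2 := hmem2 w ⟨hwN, hwX⟩ hwP hwadj
    exact absurd (hv2.trans hw2.symm) hvw
  -- ℓ ≥ 2 : v and w are not adjacent to p 1, p 2, p ℓ
  have hnadj : ∀ x : V, x ∈ Rp A ℓ p → x ∉ pathSet ℓ p →
      ∀ k, (k = 1 ∨ k = 2 ∨ k = ℓ) → ¬ Adj A x (p k) := by
    intro x hx hxP k hk hadj
    apply hx.2
    left
    refine ⟨Set.mem_iUnion₂.mpr ⟨p k, ?_, Or.symm hadj⟩, ?_⟩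
    · rcases hk with rfl | rfl | rfl <;> simp
    · intro hmem
      simp only [Set.mem_insert_iff, Set.mem_singleton_iff] at hmem
      rcases hmem with rfl | rfl | rfl
      · exact hxP ⟨1, ⟨le_rfl, by omega⟩, rfl⟩
      · exact hxP ⟨2, ⟨by omega, hl2⟩, rfl⟩
      · exact hxP ⟨ℓ, ⟨by omega, le_rfl⟩, rfl⟩
  have hnadjv : ∀ k, (k = 1 ∨ k = 2 ∨ k = ℓ) → ¬ Adj A v (p k) :=
    hnadj v ⟨hvN, hvX⟩ hvP
  have hnadjw : ∀ k, (k = 1 ∨ k = 2 ∨ k = ℓ) → ¬ Adj A w (p k) :=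
    hnadj w ⟨hwN, hwX⟩ hwP
  -- the first neighbour of v on P
  set i := Nat.find hvadj with hidef
  obtain ⟨⟨hi1, hiℓ⟩, hiadj⟩ : (1 ≤ i ∧ i ≤ ℓ) ∧ Adj A v (p i) := Nat.find_spec hvadj
  have hvfirst : ∀ k, 1 ≤ k → k < i → ¬ Adj A v (p k) := by
    intro k h1 h2 hadj
    exact Nat.find_min hvadj h2 ⟨⟨h1, by omega⟩, hadj⟩
  have hi3 : 3 ≤ i := by
    by_contra hlt
    have : i = 1 ∨ i = 2 := by omega
    rcases this with h | h
    · exact hnadjv i (Or.inl h) hiadj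
    · exact hnadjv i (Or.inr (Or.inl h)) hiadj
  have hiℓ' : i ≤ ℓ - 1 := by
    have : i ≠ ℓ := fun e => hnadjv i (Or.inr (Or.inr e)) hiadj
    omega
  have hvF : v ∈ Fatt A ℓ p i := ⟨hvN, hiadj, hvfirst⟩
  have hvi : A v (p i) ∧ ¬ A (p i) v := by
    have hnot : v ∉ FattM A ℓ p i := by
      intro hmem
      exact hvX (Or.inr (Or.inl (Set.mem_iUnion₂.mpr ⟨i, ⟨by omega, hiℓ'⟩, hmem⟩)))
    have hni : ¬ A (p i) v := fun h => hnot ⟨hvF, h⟩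
    exact ⟨hiadj.resolve_right hni, hni⟩
  -- the last neighbour of w on P
  obtain ⟨k0, hk0, hk0adj⟩ := hwadj
  set j := Nat.findGreatest (fun k => Adj A w (p k)) ℓ with hjdef
  have hjadj : Adj A w (p j) :=
    Nat.findGreatest_spec (P := fun k => Adj A w (p k)) hk0.2 hk0adj
  have hjge : k0 ≤ j :=
    Nat.le_findGreatest (P := fun k => Adj A w (p k)) hk0.2 hk0adj
  have hj1 : 1 ≤ j := le_trans hk0.1 hjge
  have hjle : j ≤ ℓ := Nat.findGreatest_le (P := fun k => Adj A w (p k)) ℓ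
  have hwlast : ∀ k, j < k → k ≤ ℓ → ¬ Adj A w (p k) := fun k h1 h2 =>
    Nat.findGreatest_is_greatest (P := fun k => Adj A w (p k)) h1 h2
  have hj3 : 3 ≤ j := by
    by_contra hlt
    have : j = 1 ∨ j = 2 := by omega
    rcases this with h | h
    · exact hnadjw j (Or.inl h) hjadj
    · exact hnadjw j (Or.inr (Or.inl h)) hjadj
  have hjℓ : j ≤ ℓ - 1 := by
    have : j ≠ ℓ := fun e => hnadjw j (Or.inr (Or.inr e)) hjadj
    omega
  have hwL : w ∈ Latt A ℓ p j := ⟨hwN, hjadj, hwlast⟩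
  have hwj : A (p j) w := by
    have hnot : w ∉ LattP A ℓ p j := by
      intro hmem
      exact hwX (Or.inr (Or.inr (Set.mem_iUnion₂.mpr ⟨j, ⟨by omega, hjℓ⟩, hmem⟩)))
    exact hjadj.resolve_left fun h => hnot ⟨hwL, h⟩
  have hl4 : 4 ≤ ℓ := by omega
  -- main case analysis
  rcases le_or_gt i j with hij | hji
  · -- i ≤ j : walk along the path from p i to p j
    refine ⟨j - i + 3,
      fun k => if k = 1 then v else if k = j - i + 3 then w else p (i + k - 2),
      ⟨by omega, ?_, ?_⟩, by norm_num, ?_, ?_⟩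
    · intro a ha b hb h
      obtain ⟨ha1, ha2⟩ := Set.mem_Icc.mp ha
      obtain ⟨hb1, hb2⟩ := Set.mem_Icc.mp hb
      by_cases e1 : a = 1 <;> by_cases e2 : b = 1 <;>
        by_cases e3 : a = j - i + 3 <;> by_cases e4 : b = j - i + 3 <;>
        simp only [e1, e2, e3, e4, if_pos, if_neg, if_true, if_false] at h ⊢ <;>
        first
          | omega
          | (exact absurd h hvw)
          | (exact absurd h.symm hvw)
          | (exact absurd h (hvP' _ (by omega) (by omega)))
          | (exact absurd h.symm (hvP' _ (by omega) (by omega)))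
          | (exact absurd h (hwP' _ (by omega) (by omega)))
          | (exact absurd h.symm (hwP' _ (by omega) (by omega)))
          | (have := hinj (Set.mem_Icc.mpr ⟨by omega, by omega⟩)
              (Set.mem_Icc.mpr ⟨by omega, by omega⟩) h; omega)
    · intro k hk1 hk2
      by_cases e1 : k = 1
      · subst e1
        have e2 : (2 : ℕ) ≠ 1 := by omega
        have e3 : (2 : ℕ) ≠ j - i + 3 := by omega
        simp only [if_pos rfl, if_neg e2, if_neg e3]
        have e4 : i + 2 - 2 = i := by omega
        rw [e4]
        exact hvi.1
      · have e3 : k ≠ j - i + 3 := by omega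
        have e4 : k + 1 ≠ 1 := by omega
        simp only [if_neg e1, if_neg e3, if_neg e4]
        by_cases e5 : k + 1 = j - i + 3
        · rw [if_pos e5]
          have e6 : i + k - 2 = j := by omega
          rw [e6]
          exact hwj
        · rw [if_neg e5]
          have e6 : i + (k + 1) - 2 = (i + k - 2) + 1 := by omega
          rw [e6]
          exact harcp _ (by omega) (by omega)
    · have e : j - i + 3 ≠ 1 := by omega
      simp [e]
    · have : j - i + 3 ≤ ℓ - 1 := by omega
      exact this.trans (le_max_right _ _)
  · -- j < i
    rcases Nat.lt_or_ge (j + 1) i with hji2 | hji2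
    · -- i ≥ j + 2 : find the chord p i → p j
      have hadjji : Adj A (p j) (p i) := by
        by_contra hno
        refine hfree (hasInducedCopy_P4' hA hwj harc hvi.1 ?_ hno ?_)
        · exact fun h => hvfirst j hj1 (by omega) (Or.symm h)
        · exact hwlast i (by omega) (by omega)
      have hchord : A (p i) (p j) :=
        hadjji.resolve_left (hfi j i hj1 (by omega) (by omega))
      obtain ⟨q, hq, hq1, hq4⟩ := dirPath4 A v (p i) (p j) w hvi.1 hchord hwj
        (hvP' i (by omega) (by omega)) (hvP' j (by omega) (by omega)) hvw
        (pne i j (by omega) (by omega) (by omega) (by omega) (by omega))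
        (Ne.symm (hwP' i (by omega) (by omega))) (Ne.symm (hwP' j (by omega) (by omega)))
      exact ⟨4, q, hq, hq1, hq4, le_trans (by norm_num) (le_max_left 6 (ℓ - 1))⟩
    · -- i = j + 1
      have hij1 : i = j + 1 := by omega
      have hj2ℓ : j + 2 ≤ ℓ := by omega
      have hvj1 : A v (p (j + 1)) := hij1 ▸ hvi.1
      have harcj : A (p (j - 1)) (p j) := by
        have := harcp (j - 1) (by omega) (by omega)
        have e : j - 1 + 1 = j := by omega
        rwa [e] at this
      by_cases ha : A (p (j + 1)) (p (j - 1))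
      · -- path v → p (j+1) → p (j-1) → p j → w
        obtain ⟨q, hq, hq1, hq5⟩ := dirPath5 A v (p (j + 1)) (p (j - 1)) (p j) w
          hvj1 ha harcj hwj
          (hvP' _ (by omega) (by omega)) (hvP' _ (by omega) (by omega))
          (hvP' _ (by omega) (by omega)) hvw
          (pne _ _ (by omega) (by omega) (by omega) (by omega) (by omega))
          (pne _ _ (by omega) (by omega) (by omega) (by omega) (by omega))
          (Ne.symm (hwP' _ (by omega) (by omega)))
          (pne _ _ (by omega) (by omega) (by omega) (by omega) (by omega))
          (Ne.symm (hwP' _ (by omega) (by omega)))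
          (Ne.symm (hwP' _ (by omega) (by omega)))
        exact ⟨5, q, hq, hq1, hq5, le_trans (by norm_num) (le_max_left 6 (ℓ - 1))⟩
      · by_cases hb : A (p (j + 2)) (p j)
        · -- path v → p (j+1) → p (j+2) → p j → w
          obtain ⟨q, hq, hq1, hq5⟩ := dirPath5 A v (p (j + 1)) (p (j + 2)) (p j) w
            hvj1 (harcp (j + 1) (by omega) (by omega)) hb hwj
            (hvP' _ (by omega) (by omega)) (hvP' _ (by omega) (by omega))
            (hvP' _ (by omega) (by omega)) hvw
            (pne _ _ (by omega) (by omega) (by omega) (by omega) (by omega))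
            (pne _ _ (by omega) (by omega) (by omega) (by omega) (by omega))
            (Ne.symm (hwP' _ (by omega) (by omega)))
            (pne _ _ (by omega) (by omega) (by omega) (by omega) (by omega))
            (Ne.symm (hwP' _ (by omega) (by omega)))
            (Ne.symm (hwP' _ (by omega) (by omega)))
          exact ⟨5, q, hq, hq1, hq5, le_trans (by norm_num) (le_max_left 6 (ℓ - 1))⟩
        · -- the chord p (j+2) → p (j-1) must exist
          have hc : A (p (j + 2)) (p (j - 1)) := by
            by_contra hc
            refine hfree (hasInducedCopy_P4' hA harcj (harcp j (by omega) (by omega))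
              (harcp (j + 1) (by omega) (by omega)) ?_ ?_ ?_)
            · rintro (h | h)
              · exact hfi (j - 1) (j + 1) (by omega) (by omega) (by omega) h
              · exact ha h
            · rintro (h | h)
              · exact hfi (j - 1) (j + 2) (by omega) (by omega) (by omega) h
              · exact hc h
            · rintro (h | h)
              · exact hfi j (j + 2) (by omega) (by omega) (by omega) h
              · exact hb h
          -- path v → p (j+1) → p (j+2) → p (j-1) → p j → w
          obtain ⟨q, hq, hq1, hq6⟩ := dirPath6 A v (p (j + 1)) (p (j + 2)) (p (j - 1))
            (p j) w
            hvj1 (harcp (j + 1) (by omega) (by omega)) hc harcj hwj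
            (hvP' _ (by omega) (by omega)) (hvP' _ (by omega) (by omega))
            (hvP' _ (by omega) (by omega)) (hvP' _ (by omega) (by omega)) hvw
            (pne _ _ (by omega) (by omega) (by omega) (by omega) (by omega))
            (pne _ _ (by omega) (by omega) (by omega) (by omega) (by omega))
            (pne _ _ (by omega) (by omega) (by omega) (by omega) (by omega))
            (Ne.symm (hwP' _ (by omega) (by omega)))
            (pne _ _ (by omega) (by omega) (by omega) (by omega) (by omega))
            (pne _ _ (by omega) (by omega) (by omega) (by omega) (by omega))
            (Ne.symm (hwP' _ (by omega) (by omega)))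
            (pne _ _ (by omega) (by omega) (by omega) (by omega) (by omega))
            (Ne.symm (hwP' _ (by omega) (by omega)))
            (Ne.symm (hwP' _ (by omega) (by omega)))
          exact ⟨6, q, hq, hq1, hq6, le_max_left 6 (ℓ - 1)⟩

end DichiP4
end

section
/- Let D be an A⃗4-free oriented graph, let P = p1→p2→⋯→p_ℓ be a directed path in D that is a shortest directed path from p1 to p_ℓ, and let R^a be defined with respect to P. Let γ be an integer such that χ⃗(N(v)) ≤ γ for each v ∈ V(P). Then χ⃗(R^a) ≤ 3γ. -/
namespace DichiP4

variable {V : Type*}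

/-! ### Auxiliary lemmas for the proof of `A4free_dichi_Ra` -/

lemma adj_symm' {A : V → V → Prop} {u v : V} (h : Adj A u v) : Adj A v u :=
  h.elim Or.inr Or.inl

lemma not_transGen_of_not {α : Type*} {r : α → α → Prop} (h : ∀ x y, ¬ r x y) {a b : α}
    (ht : Relation.TransGen r a b) : False := by
  induction ht with
  | single h' => exact h _ _ h'
  | tail _ h' _ => exact h _ _ h'

lemma transGen_exists_first {α : Type*} {r : α → α → Prop} {a b : α}
    (ht : Relation.TransGen r a b) : ∃ c, r a c := by
  induction ht with
  | single h' => exact ⟨_, h'⟩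
  | tail _ _ ih => exact ih

lemma dicolorableOn_mono {A : V → V → Prop} {s : Set V} {k k' : ℕ}
    (h : DicolorableOn A s k) (hk : k ≤ k') : DicolorableOn A s k' := by
  obtain ⟨c, h1, h2⟩ := h
  exact ⟨c, fun v hv => lt_of_lt_of_le (h1 v hv) hk, h2⟩

lemma dicolorableOn_of_dichi_le [Fintype V] {A : V → V → Prop} (hA : Oriented A)
    {s : Set V} {k : ℕ} (h : dichi A s ≤ k) : DicolorableOn A s k := by
  classical
  have hwit : DicolorableOn A s (Fintype.card V) := by
    refine ⟨fun v => (Fintype.equivFin V v : ℕ), fun v _ => (Fintype.equivFin V v).isLt,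
      fun i v hv => ?_⟩
    refine not_transGen_of_not (fun x y hxy => ?_) hv
    obtain ⟨hx, hy, hxy'⟩ := hxy
    have hxy'' : x = y :=
      (Fintype.equivFin V).injective (Fin.val_injective (hx.2.trans hy.2.symm))
    cases hxy''
    exact hA x x hxy' hxy'
  have hne : {n | DicolorableOn A s n}.Nonempty := ⟨_, hwit⟩
  exact dicolorableOn_mono (Nat.sInf_mem hne) h

/-- The set of indices of path vertices adjacent to `v`. -/
def adjIdx (A : V → V → Prop) (ℓ : ℕ) (p : ℕ → V) (v : V) : Set ℕ :=
  {k | 1 ≤ k ∧ k ≤ ℓ ∧ Adj A v (p k)}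

/-- Index of the first neighbor of `v` on the path. -/
noncomputable def fI (A : V → V → Prop) (ℓ : ℕ) (p : ℕ → V) (v : V) : ℕ :=
  sInf (adjIdx A ℓ p v)

/-- Index of the last neighbor of `v` on the path. -/
noncomputable def lI (A : V → V → Prop) (ℓ : ℕ) (p : ℕ → V) (v : V) : ℕ :=
  sSup (adjIdx A ℓ p v)

lemma ra_main {A : V → V → Prop} (hA : Oriented A) {ℓ : ℕ} {p : ℕ → V}
    (hp : IsShortestDirPath A ℓ p) {v : V} (hv : v ∈ Ra A ℓ p) :
    2 ≤ fI A ℓ p v ∧ fI A ℓ p v < lI A ℓ p v ∧ lI A ℓ p v + 1 ≤ ℓ ∧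
      A (p (fI A ℓ p v)) v ∧ A v (p (lI A ℓ p v)) ∧ v ∉ pathSet ℓ p := by
  have hℓ1 : 1 ≤ ℓ := hp.1.1
  have hvN : v ∈ pathNbrs A ℓ p := hv.1
  have hvU : v ∈ ⋃ w ∈ pathSet ℓ p, nbr A w := hvN.1
  have hvP : v ∉ pathSet ℓ p := hvN.2
  have hnotW : v ∉ Wa A ℓ p := fun h => hv.2 (Or.inr h)
  have hnotE : v ∉ nbrSet A {p 1, p ℓ} := fun h => hv.2 (Or.inl h)
  -- nonemptiness of adjIdx
  obtain ⟨w, hw, hvw⟩ := Set.mem_iUnion₂.1 hvU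
  obtain ⟨k₀, hk₀, rfl⟩ := hw
  have hS0 : k₀ ∈ adjIdx A ℓ p v := ⟨hk₀.1, hk₀.2, adj_symm' hvw⟩
  have hne : (adjIdx A ℓ p v).Nonempty := ⟨k₀, hS0⟩
  have hbdd : BddAbove (adjIdx A ℓ p v) := ⟨ℓ, fun k hk => hk.2.1⟩
  have hiS : fI A ℓ p v ∈ adjIdx A ℓ p v := Nat.sInf_mem hne
  have hjS : lI A ℓ p v ∈ adjIdx A ℓ p v := Nat.sSup_mem hne hbdd
  have hij : fI A ℓ p v ≤ lI A ℓ p v := Nat.sInf_le hjS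
  -- not adjacent to endpoints
  have hend : ∀ k, k = 1 ∨ k = ℓ → ¬ Adj A v (p k) := by
    intro k hk hadj
    apply hnotE
    refine ⟨Set.mem_iUnion₂.2 ⟨p k, ?_, adj_symm' hadj⟩, ?_⟩
    · rcases hk with rfl | rfl
      · exact Or.inl rfl
      · exact Or.inr rfl
    · intro hmem
      rcases hmem with h1 | h1
      · exact hvP ⟨1, ⟨le_refl 1, hℓ1⟩, h1.symm⟩
      · exact hvP ⟨ℓ, ⟨hℓ1, le_refl ℓ⟩, h1.symm⟩
  have h2i : 2 ≤ fI A ℓ p v := by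
    have h1 := hiS.1
    have : fI A ℓ p v ≠ 1 := fun h => hend _ (Or.inl h) hiS.2.2
    omega
  have hjl : lI A ℓ p v + 1 ≤ ℓ := by
    have h1 := hjS.2.1
    have : lI A ℓ p v ≠ ℓ := fun h => hend _ (Or.inr h) hjS.2.2
    omega
  -- first-neighbor membership
  have hF : v ∈ Fatt A ℓ p (fI A ℓ p v) := by
    refine ⟨⟨hvU, hvP⟩, hiS.2.2, fun i' h1 h2 hadj => ?_⟩
    have h5 : fI A ℓ p v ≤ i' := Nat.sInf_le (show i' ∈ adjIdx A ℓ p v from ⟨h1, by omega, hadj⟩)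
    omega
  have hnF : ¬ A v (p (fI A ℓ p v)) := by
    intro hvp
    exact hnotW (Or.inl (Set.mem_iUnion₂.2
      ⟨fI A ℓ p v, Set.mem_Icc.2 ⟨h2i, by omega⟩, hF, hvp⟩))
  have hApv : A (p (fI A ℓ p v)) v := (hiS.2.2).resolve_left hnF
  -- last-neighbor membership
  have hL : v ∈ Latt A ℓ p (lI A ℓ p v) := by
    refine ⟨⟨hvU, hvP⟩, hjS.2.2, fun j' hj1 hj2 hadj => ?_⟩
    have h5 : j' ≤ lI A ℓ p v := le_csSup hbdd (show j' ∈ adjIdx A ℓ p v from ⟨by omega, hj2, hadj⟩)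
    omega
  have hnL : ¬ A (p (lI A ℓ p v)) v := by
    intro hpv
    exact hnotW (Or.inr (Set.mem_iUnion₂.2
      ⟨lI A ℓ p v, Set.mem_Icc.2 ⟨by omega, by omega⟩, hL, hpv⟩))
  have hvpj : A v (p (lI A ℓ p v)) := (hjS.2.2).resolve_right hnL
  have hilt : fI A ℓ p v < lI A ℓ p v := by
    rcases lt_or_eq_of_le hij with h | h
    · exact h
    · exact absurd (h ▸ hvpj) hnF
  exact ⟨h2i, hilt, hjl, hApv, hvpj, hvP⟩

lemma ra_shortcut {A : V → V → Prop} (hA : Oriented A) {ℓ : ℕ} {p : ℕ → V}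
    (hp : IsShortestDirPath A ℓ p) {u v : V} (hu : u ∈ Ra A ℓ p) (hv : v ∈ Ra A ℓ p)
    (huv : A u v) : lI A ℓ p v ≤ fI A ℓ p u + 3 := by
  obtain ⟨h2u, hltu, hlu, hAu, _, huP⟩ := ra_main hA hp hu
  obtain ⟨h2v, hltv, hlv, _, hAv, hvP⟩ := ra_main hA hp hv
  by_contra hcon
  push_neg at hcon
  set i := fI A ℓ p u with hidef
  set j := lI A ℓ p v with hjdef
  have hℓ1 : 1 ≤ ℓ := hp.1.1
  have hinj := hp.1.2.1
  have harc := hp.1.2.2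
  have huv' : u ≠ v := by
    intro he; subst he; exact hA u u huv huv
  set m := i + 3 + (ℓ - j) with hm
  set q : ℕ → V := fun k =>
    if k ≤ i then p k else if k = i + 1 then u else if k = i + 2 then v
      else p (k - (i + 3) + j) with hq
  have q1 : ∀ k, k ≤ i → q k = p k := by
    intro k hk; simp only [hq]; rw [if_pos hk]
  have q2 : q (i + 1) = u := by
    simp only [hq]
    rw [if_neg (show ¬ (i + 1 ≤ i) by omega)]
    simp
  have q3 : q (i + 2) = v := by
    simp only [hq]
    rw [if_neg (show ¬ (i + 2 ≤ i) by omega), if_neg (show ¬ (i + 2 = i + 1) by omega)]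
    simp
  have q4 : ∀ k, i + 3 ≤ k → q k = p (k - (i + 3) + j) := by
    intro k hk; simp only [hq]
    rw [if_neg (show ¬ (k ≤ i) by omega), if_neg (show ¬ (k = i + 1) by omega),
      if_neg (show ¬ (k = i + 2) by omega)]
  have hpmem : ∀ k, 1 ≤ k → k ≤ ℓ → p k ∈ pathSet ℓ p := fun k h1 h2 => ⟨k, ⟨h1, h2⟩, rfl⟩
  have hdir : IsDirPath A m q := by
    refine ⟨by omega, ?_, ?_⟩
    · intro a ha b hb heq
      simp only [Set.mem_Icc] at ha hb
      rcases (show a ≤ i ∨ a = i + 1 ∨ a = i + 2 ∨ i + 3 ≤ a by omega) with h1 | h1 | h1 | h1 <;>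
        rcases (show b ≤ i ∨ b = i + 1 ∨ b = i + 2 ∨ i + 3 ≤ b by omega) with h2 | h2 | h2 | h2
      · rw [q1 a h1, q1 b h2] at heq
        exact hinj ⟨ha.1, by omega⟩ ⟨hb.1, by omega⟩ heq
      · subst h2; rw [q1 a h1, q2] at heq
        exact absurd (heq ▸ hpmem a ha.1 (by omega)) huP
      · subst h2; rw [q1 a h1, q3] at heq
        exact absurd (heq ▸ hpmem a ha.1 (by omega)) hvP
      · rw [q1 a h1, q4 b h2] at heq
        have := hinj ⟨ha.1, by omega⟩ ⟨by omega, by omega⟩ heq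
        omega
      · subst h1; rw [q2, q1 b h2] at heq
        exact absurd (hpmem b hb.1 (by omega)) (heq ▸ huP)
      · omega
      · subst h1; subst h2; rw [q2, q3] at heq
        exact absurd heq huv'
      · subst h1; rw [q2, q4 b h2] at heq
        exact absurd (hpmem _ (by omega) (by omega)) (heq ▸ huP)
      · subst h1; rw [q3, q1 b h2] at heq
        exact absurd (hpmem b hb.1 (by omega)) (heq ▸ hvP)
      · subst h1; subst h2; rw [q3, q2] at heq
        exact absurd heq.symm huv'
      · omega
      · subst h1; rw [q3, q4 b h2] at heq
        exact absurd (hpmem _ (by omega) (by omega)) (heq ▸ hvP)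
      · rw [q4 a h1, q1 b h2] at heq
        have := hinj ⟨by omega, by omega⟩ ⟨hb.1, by omega⟩ heq
        omega
      · subst h2; rw [q4 a h1, q2] at heq
        exact absurd (heq ▸ hpmem _ (by omega) (by omega)) huP
      · subst h2; rw [q4 a h1, q3] at heq
        exact absurd (heq ▸ hpmem _ (by omega) (by omega)) hvP
      · rw [q4 a h1, q4 b h2] at heq
        have := hinj ⟨by omega, by omega⟩ ⟨by omega, by omega⟩ heq
        omega
    · intro k hk1 hkm
      rcases (show k + 1 ≤ i ∨ k = i ∨ k = i + 1 ∨ k = i + 2 ∨ i + 3 ≤ k by omega)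
        with h | h | h | h | h
      · rw [q1 k (by omega), q1 (k + 1) h]
        exact harc k hk1 (by omega)
      · subst h; rw [q1 i le_rfl, q2]
        exact hAu
      · subst h; rw [q2, (show i + 1 + 1 = i + 2 by omega), q3]
        exact huv
      · subst h; rw [q3, (show i + 2 + 1 = i + 3 by omega), q4 (i + 3) le_rfl,
          (show i + 3 - (i + 3) + j = j by omega)]
        exact hAv
      · rw [q4 k h, q4 (k + 1) (by omega), (show k + 1 - (i + 3) + j = k - (i + 3) + j + 1 by omega)]
        exact harc _ (by omega) (by omega)
  have hq1 : q 1 = p 1 := q1 1 (by omega)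
  have hqm : q m = p ℓ := by
    rw [q4 m (by omega), (show m - (i + 3) + j = ℓ by omega)]
  have := hp.2 m q hdir hq1 hqm
  omega


/-- in an `A⃗4`-free oriented graph, for a shortest directed path
`P = p 1 → ⋯ → p ℓ` with `χ⃗(N(v)) ≤ γ` for each `v ∈ V(P)`, `χ⃗(R^a) ≤ 3γ`. -/
theorem A4free_dichi_Ra {V : Type*} [Fintype V]
    (A : V → V → Prop) (hA : Oriented A) (hfree : Free A A4vec)
    (ℓ : ℕ) (p : ℕ → V) (hp : IsShortestDirPath A ℓ p)
    (γ : ℕ) (hγ : ∀ i, 1 ≤ i → i ≤ ℓ → dichi A (nbr A (p i)) ≤ γ) :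
    dichi A (Ra A ℓ p) ≤ 3 * γ := by
  classical
  have hℓ1 : 1 ≤ ℓ := hp.1.1
  have hex : ∀ i : ℕ, ∃ c : V → ℕ, 1 ≤ i → i ≤ ℓ →
      (∀ w ∈ nbr A (p i), c w < γ) ∧ ∀ t, AcyclicOn A {w | w ∈ nbr A (p i) ∧ c w = t} := by
    intro i
    by_cases h : 1 ≤ i ∧ i ≤ ℓ
    · obtain ⟨c, hc1, hc2⟩ := dicolorableOn_of_dichi_le hA (hγ i h.1 h.2)
      exact ⟨c, fun _ _ => ⟨hc1, hc2⟩⟩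
    · exact ⟨fun _ => 0, fun h1 h2 => absurd ⟨h1, h2⟩ h⟩
  choose cc hcc using hex
  have key : DicolorableOn A (Ra A ℓ p) (3 * γ) := by
    refine ⟨fun v => (fI A ℓ p v % 3) * γ + cc (fI A ℓ p v) v, ?_, ?_⟩
    · intro v hv
      obtain ⟨h2, hlt, hl, hApv, _, _⟩ := ra_main hA hp hv
      have hb := (hcc (fI A ℓ p v) (by omega) (by omega)).1 v (Or.inl hApv)
      have h4 : (fI A ℓ p v % 3) * γ ≤ 2 * γ :=
        Nat.mul_le_mul_right _ (by omega : fI A ℓ p v % 3 ≤ 2)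
      show (fI A ℓ p v % 3) * γ + cc (fI A ℓ p v) v < 3 * γ
      omega
    · intro t w0 hcyc
      -- notation for the coloring
      set col : V → ℕ := fun v => (fI A ℓ p v % 3) * γ + cc (fI A ℓ p v) v with hcol
      -- the step lemma: first indices do not increase along arcs in a class
      have hstep : ∀ x y : V, x ∈ Ra A ℓ p → y ∈ Ra A ℓ p → col x = col y → A x y →
          fI A ℓ p y ≤ fI A ℓ p x := by
        intro x y hxR hyR hcxy hxy
        obtain ⟨h2x, hltx, hlx, hApx, _, _⟩ := ra_main hA hp hxR
        obtain ⟨h2y, hlty, hly, hApy, _, _⟩ := ra_main hA hp hyR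
        have hsc : lI A ℓ p y ≤ fI A ℓ p x + 3 := ra_shortcut hA hp hxR hyR hxy
        have hy2 : fI A ℓ p y ≤ fI A ℓ p x + 2 := by omega
        have hbx : cc (fI A ℓ p x) x < γ :=
          (hcc (fI A ℓ p x) (by omega) (by omega)).1 x (Or.inl hApx)
        have hby : cc (fI A ℓ p y) y < γ :=
          (hcc (fI A ℓ p y) (by omega) (by omega)).1 y (Or.inl hApy)
        have hγ0 : 0 < γ := by omega
        have heq : (fI A ℓ p x % 3) * γ + cc (fI A ℓ p x) x
            = (fI A ℓ p y % 3) * γ + cc (fI A ℓ p y) y := by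
          simpa only [hcol] using hcxy
        have hdx : ((fI A ℓ p x % 3) * γ + cc (fI A ℓ p x) x) / γ = fI A ℓ p x % 3 := by
          rw [Nat.mul_comm, Nat.mul_add_div hγ0, Nat.div_eq_of_lt hbx, Nat.add_zero]
        have hdy : ((fI A ℓ p y % 3) * γ + cc (fI A ℓ p y) y) / γ = fI A ℓ p y % 3 := by
          rw [Nat.mul_comm, Nat.mul_add_div hγ0, Nat.div_eq_of_lt hby, Nat.add_zero]
        have hmodeq : fI A ℓ p x % 3 = fI A ℓ p y % 3 := by
          rw [← hdx, ← hdy, heq]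
        omega
      -- convert the cycle to a convenient relation
      set T : V → V → Prop := fun x y =>
        (x ∈ Ra A ℓ p ∧ col x = t) ∧ (y ∈ Ra A ℓ p ∧ col y = t) ∧ A x y with hT
      have hcyc' : Relation.TransGen T w0 w0 :=
        Relation.TransGen.mono (fun x y h => ⟨h.1, h.2.1, h.2.2⟩) _ _ hcyc
      obtain ⟨z, hz⟩ := transGen_exists_first hcyc'
      have hw0 : w0 ∈ Ra A ℓ p ∧ col w0 = t := hz.1
      set i₀ := fI A ℓ p w0 with hi₀
      have hmono : ∀ a b : V, Relation.TransGen T a b → fI A ℓ p b ≤ fI A ℓ p a := by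
        intro a b h
        induction h with
        | single h' => exact hstep _ _ h'.1.1 h'.2.1.1 (h'.1.2.trans h'.2.1.2.symm) h'.2.2
        | tail _ h' ih =>
            exact le_trans (hstep _ _ h'.1.1 h'.2.1.1 (h'.1.2.trans h'.2.1.2.symm) h'.2.2) ih
      have hrefine : ∀ b, Relation.TransGen T w0 b → fI A ℓ p b = i₀ →
          Relation.TransGen (fun x y => T x y ∧ fI A ℓ p x = i₀ ∧ fI A ℓ p y = i₀) w0 b := by
        intro b h
        induction h with
        | single h' => exact fun hb => Relation.TransGen.single ⟨h', rfl, hb⟩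
        | tail hab h' ih =>
            rename_i b' c'
            intro hb
            have e1 : fI A ℓ p c' ≤ fI A ℓ p b' :=
              hstep _ _ h'.1.1 h'.2.1.1 (h'.1.2.trans h'.2.1.2.symm) h'.2.2
            have e2 : fI A ℓ p b' ≤ fI A ℓ p w0 := hmono _ _ hab
            have e3 : fI A ℓ p b' = i₀ := by omega
            exact (ih e3).tail ⟨h', e3, hb⟩
      have hU := hrefine w0 hcyc' rfl
      have h1ℓ₀ : 1 ≤ i₀ ∧ i₀ ≤ ℓ := by
        obtain ⟨h2, hlt, hl, _, _, _⟩ := ra_main hA hp hw0.1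
        omega
      set t₀ := cc i₀ w0 with ht₀
      have hfinal : Relation.TransGen (fun x y =>
          x ∈ {w | w ∈ nbr A (p i₀) ∧ cc i₀ w = t₀} ∧
          y ∈ {w | w ∈ nbr A (p i₀) ∧ cc i₀ w = t₀} ∧ A x y) w0 w0 := by
        refine Relation.TransGen.mono ?_ _ _ hU
        intro x y ⟨hTxy, hfx, hfy⟩
        obtain ⟨hxm, hym, hxy⟩ := hTxy
        have hclass : ∀ z : V, z ∈ Ra A ℓ p → col z = t → fI A ℓ p z = i₀ →
            z ∈ nbr A (p i₀) ∧ cc i₀ z = t₀ := by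
          intro z hzR hzc hzf
          obtain ⟨_, _, _, hApz, _, _⟩ := ra_main hA hp hzR
          constructor
          · rw [hzf] at hApz
            exact Or.inl hApz
          · have h1 : col z = col w0 := hzc.trans hw0.2.symm
            simp only [hcol] at h1
            rw [hzf, ← hi₀] at h1
            exact Nat.add_left_cancel h1
        exact ⟨hclass x hxm.1 hxm.2 hfx, hclass y hym.1 hym.2 hfy, hxy⟩
      exact (hcc i₀ h1ℓ₀.1 h1ℓ₀.2).2 t₀ w0 hfinal
  exact Nat.sInf_le key


end DichiP4
end
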